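/- Let k > 2 and m ≥ φ(k) + 1 be integers, and write Φ_k(m+X) = Σ_{d=0}^{φ(k)} p_d X^d. Then the coefficients satisfy 0 < p_{φ(k)-1} ≤ p_{φ(k)-2} ≤ ⋯ ≤ p_1 ≤ p_0 and p_0 ≥ 2. -/

import Mathlib

open Polynomial


/-- Coefficient-ratio invariant: `h` has nonnegative coefficients, degree ≤ ν, and
`(ν - d + 1) * h_{d-1} ≥ d * N * h_d` for `1 ≤ d ≤ ν`. -/
def CycRinv (N : ℝ) (ν : ℕ) (h : ℝ[X]) : Prop :=
  (∀ d, 0 ≤ h.coeff d) ∧ (∀ d, ν < d → h.coeff d = 0) ∧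
    (∀ d : ℕ, 1 ≤ d → d ≤ ν →
      (d : ℝ) * N * h.coeff d ≤ ((ν : ℝ) - d + 1) * h.coeff (d - 1))

theorem CycRinv.one (N : ℝ) : CycRinv N 0 1 := by
  refine ⟨fun d => ?_, fun d hd => ?_, fun d hd1 hd2 => by omega⟩
  · rcases Nat.eq_zero_or_pos d with rfl | hd
    · simp
    · simp [Polynomial.coeff_one, Nat.pos_iff_ne_zero.mp hd]
  · simp [Polynomial.coeff_one, Nat.pos_iff_ne_zero.mp hd]

theorem CycRinv.add {N : ℝ} {ν : ℕ} {h g : ℝ[X]} (Hh : CycRinv N ν h)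
    (Hg : CycRinv N ν g) : CycRinv N ν (h + g) := by
  obtain ⟨h1, h2, h3⟩ := Hh
  obtain ⟨g1, g2, g3⟩ := Hg
  refine ⟨fun d => ?_, fun d hd => ?_, fun d hd1 hd2 => ?_⟩
  · simp only [coeff_add]; exact add_nonneg (h1 d) (g1 d)
  · simp only [coeff_add, h2 d hd, g2 d hd, add_zero]
  · simp only [coeff_add]
    have := h3 d hd1 hd2
    have := g3 d hd1 hd2
    ring_nf
    nlinarith [h3 d hd1 hd2, g3 d hd1 hd2]

theorem CycRinv.smul {N : ℝ} {ν : ℕ} {h : ℝ[X]} {ε : ℝ} (hε : 0 ≤ ε)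
    (Hh : CycRinv N ν h) : CycRinv N ν (C ε * h) := by
  obtain ⟨h1, h2, h3⟩ := Hh
  refine ⟨fun d => ?_, fun d hd => ?_, fun d hd1 hd2 => ?_⟩
  · simp only [coeff_C_mul]; exact mul_nonneg hε (h1 d)
  · simp only [coeff_C_mul, h2 d hd, mul_zero]
  · simp only [coeff_C_mul]
    nlinarith [h3 d hd1 hd2, h1 d, h1 (d-1)]

theorem CycRinv.mono {N : ℝ} {ν ν' : ℕ} {h : ℝ[X]} (hνν : ν ≤ ν')
    (Hh : CycRinv N ν h) : CycRinv N ν' h := by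
  obtain ⟨h1, h2, h3⟩ := Hh
  refine ⟨h1, fun d hd => h2 d (by omega), fun d hd1 hd2 => ?_⟩
  rcases le_or_gt d ν with hle | hlt
  · have := h3 d hd1 hle
    have hcast : ((ν : ℝ) - d + 1) ≤ ((ν' : ℝ) - d + 1) := by
      have : (ν : ℝ) ≤ ν' := by exact_mod_cast hνν
      linarith
    nlinarith [h1 (d - 1)]
  · rw [h2 d hlt, mul_zero]
    have hd' : (d : ℝ) ≤ ν' := by exact_mod_cast hd2
    nlinarith [h1 (d - 1)]

theorem CycRinv.mul_X_add_C {N : ℝ} {ν : ℕ} {h : ℝ[X]} (hN : 0 ≤ N) {u : ℝ}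
    (hu : N ≤ u) (H : CycRinv N ν h) : CycRinv N (ν + 1) (h * (X + C u)) := by
  obtain ⟨Hpos, Hdeg, Hrat⟩ := H
  have hu0 : 0 ≤ u := hN.trans hu
  have hmul : h * (X + C u) = h * X + h * C u := by ring
  have hc0 : (h * (X + C u)).coeff 0 = u * h.coeff 0 := by
    rw [hmul, coeff_add, mul_coeff_zero, coeff_X_zero, mul_zero, coeff_mul_C]; ring
  have hcs : ∀ e : ℕ, (h * (X + C u)).coeff (e + 1) = h.coeff e + u * h.coeff (e + 1) := by
    intro e
    rw [hmul, coeff_add, coeff_mul_X, coeff_mul_C]; ring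
  refine ⟨fun d => ?_, fun d hd => ?_, fun d hd1 hd2 => ?_⟩
  · cases d with
    | zero => rw [hc0]; exact mul_nonneg hu0 (Hpos 0)
    | succ e => rw [hcs]; exact add_nonneg (Hpos e) (mul_nonneg hu0 (Hpos _))
  · cases d with
    | zero => omega
    | succ e => rw [hcs, Hdeg e (by omega), Hdeg (e+1) (by omega)]; ring
  · cases d with
    | zero => omega
    | succ e =>
      cases e with
      | zero =>
        rw [hcs 0, hc0]
        simp only [Nat.cast_one, Nat.cast_add]
        have h1 : (1 : ℝ) * N * h.coeff 1 ≤ ((ν:ℝ) - 1 + 1) * h.coeff 0 := by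
          rcases le_or_gt 1 ν with hle | hlt
          · have := Hrat 1 le_rfl hle
            simpa using this
          · interval_cases ν
            rw [Hdeg 1 (by omega)]
            simp [Hpos 0]
        have h2 : u * ((1:ℝ) * N * h.coeff 1) ≤ u * (((ν:ℝ) - 1 + 1) * h.coeff 0) :=
          mul_le_mul_of_nonneg_left h1 hu0
        have h3 : N * h.coeff 0 ≤ u * h.coeff 0 :=
          mul_le_mul_of_nonneg_right hu (Hpos 0)
        push_cast
        nlinarith
      | succ f =>
        simp only [Nat.add_sub_cancel]
        rw [hcs (f+1), hcs f]
        have hfν : f + 1 ≤ ν := by omega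
        have hB := Hrat (f+1) (by omega) hfν
        simp only [Nat.add_sub_cancel] at hB
        have hA : ((f:ℝ)+2) * N * h.coeff (f+2) ≤ ((ν:ℝ) - (f+2) + 1) * h.coeff (f+1) := by
          rcases le_or_gt (f+2) ν with hle | hlt
          · have := Hrat (f+2) (by omega) hle
            push_cast at this ⊢
            convert this using 2 <;> push_cast <;> ring
          · have h0 : h.coeff (f+2) = 0 := Hdeg (f+2) hlt
            have hν2 : ν = f + 2 - 1 ∨ ν < f + 2 - 1 := by omega
            have hveq : (f:ℝ) + 2 - 1 ≤ (ν:ℝ) + 1 - 1 := by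
              have : (f:ℕ) + 2 ≤ ν + 1 := hd2
              have : ((f:ℝ) + 2) ≤ (ν:ℝ) + 1 := by exact_mod_cast this
              linarith
            rw [h0, mul_zero]
            have : (0:ℝ) ≤ ((ν:ℝ) - (f+2) + 1) * h.coeff (f+1) := by
              apply mul_nonneg _ (Hpos (f+1))
              linarith
            linarith
        have hC : N * h.coeff (f+1) ≤ u * h.coeff (f+1) :=
          mul_le_mul_of_nonneg_right hu (Hpos (f+1))
        have hAu : u * (((f:ℝ)+2) * N * h.coeff (f+2)) ≤
            u * (((ν:ℝ) - (f+2) + 1) * h.coeff (f+1)) :=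
          mul_le_mul_of_nonneg_left hA hu0
        have hBc : ((f:ℝ)+1) * N * h.coeff (f+1) ≤ ((ν:ℝ) - (f+1) + 1) * h.coeff f := by
          push_cast at hB ⊢
          convert hB using 2 <;> push_cast <;> ring
        push_cast
        nlinarith

theorem CycRinv.step {N : ℝ} {ν : ℕ} {h : ℝ[X]} (H : CycRinv N ν h)
    (hN : (ν : ℝ) ≤ N) {d : ℕ} (hd : 1 ≤ d) : h.coeff d ≤ h.coeff (d - 1) := by
  obtain ⟨Hpos, Hdeg, Hrat⟩ := H
  rcases le_or_gt d ν with hle | hlt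
  · have h1 := Hrat d hd hle
    have hdR : (1:ℝ) ≤ (d:ℝ) := by exact_mod_cast hd
    have hleR : (d:ℝ) ≤ (ν:ℝ) := by exact_mod_cast hle
    have hpos : (0:ℝ) < (ν:ℝ) - d + 1 := by linarith
    have hN0 : (0:ℝ) ≤ N := le_trans (by positivity) hN
    have h2 : ((ν:ℝ) - d + 1) * h.coeff d ≤ (d:ℝ) * N * h.coeff d := by
      apply mul_le_mul_of_nonneg_right _ (Hpos d)
      nlinarith
    have := h2.trans h1
    exact le_of_mul_le_mul_left this hpos
  · rw [Hdeg d hlt]; exact Hpos _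

theorem CycRinv.le_coeff_zero {N : ℝ} {ν : ℕ} {h : ℝ[X]} (H : CycRinv N ν h)
    (hN : (ν : ℝ) ≤ N) : ∀ j, h.coeff j ≤ h.coeff 0 := by
  intro j
  induction j with
  | zero => exact le_rfl
  | succ i ihi =>
    have := H.step hN (d := i + 1) (by omega)
    simpa using this.trans ihi

theorem cyc_pair (m : ℝ) (hm1 : 1 ≤ m) :
    ∀ (c : ℕ) (s : Finset ℂ), s.card = c →
      (∀ z ∈ s, (starRingEnd ℂ) z ∈ s) →
      (∀ z ∈ s, z.im ≠ 0) →
      (∀ z ∈ s, z.re ≤ 1) →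
      ∃ r : ℝ[X], r.map (algebraMap ℝ ℂ) = (∏ z ∈ s, (X + C ((m:ℂ) - z))) ∧
        CycRinv (m - 1) c r := by
  intro c
  induction c using Nat.strong_induction_on with
  | _ c ih =>
    intro s hcard hconj him hre
    rcases s.eq_empty_or_nonempty with rfl | ⟨z, hz⟩
    · obtain rfl : c = 0 := by simpa using hcard.symm
      exact ⟨1, by simp, CycRinv.one (m - 1)⟩
    · have hws : (starRingEnd ℂ) z ∈ s := hconj z hz
      have hwz : (starRingEnd ℂ) z ≠ z := fun hcontra =>
        him z hz (Complex.conj_eq_iff_im.mp hcontra)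
      have hwz' : (starRingEnd ℂ) z ∈ s.erase z := Finset.mem_erase.mpr ⟨hwz, hws⟩
      have hcards : ((s.erase z).erase ((starRingEnd ℂ) z)).card = c - 2 := by
        rw [Finset.card_erase_of_mem hwz', Finset.card_erase_of_mem hz, hcard]
        omega
      have hc2 : 2 ≤ c := by
        have h1 : 0 < (s.erase z).card := Finset.card_pos.mpr ⟨_, hwz'⟩
        rw [Finset.card_erase_of_mem hz, hcard] at h1
        omega
      have hsub : ∀ v ∈ (s.erase z).erase ((starRingEnd ℂ) z), v ∈ s := fun v hv =>
        Finset.mem_of_mem_erase (Finset.mem_of_mem_erase hv)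
      have hconj' : ∀ v ∈ (s.erase z).erase ((starRingEnd ℂ) z),
          (starRingEnd ℂ) v ∈ (s.erase z).erase ((starRingEnd ℂ) z) := by
        intro v hv
        obtain ⟨hvw, hv2⟩ := Finset.mem_erase.mp hv
        obtain ⟨hvz, hvs⟩ := Finset.mem_erase.mp hv2
        refine Finset.mem_erase.mpr ⟨?_, Finset.mem_erase.mpr ⟨?_, hconj v hvs⟩⟩
        · intro hcc
          have h2 : v = z := by simpa using congrArg (starRingEnd ℂ) hcc
          exact hvz h2
        · intro hcc
          have h2 : v = (starRingEnd ℂ) z := by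
            simpa using congrArg (starRingEnd ℂ) hcc
          exact hvw h2
      obtain ⟨r', hmap', hR'⟩ := ih (c - 2) (by omega) _ hcards hconj'
        (fun v hv => him v (hsub v hv)) (fun v hv => hre v (hsub v hv))
      have hN0 : (0:ℝ) ≤ m - 1 := by linarith
      have huN : m - 1 ≤ m - z.re := by have := hre z hz; linarith
      refine ⟨r' * (X + C (m - z.re)) * (X + C (m - z.re)) + C (z.im ^ 2) * r', ?_, ?_⟩
      · have e1 : ((m:ℂ) - z) + ((m:ℂ) - (starRingEnd ℂ) z) =
            ((m - z.re : ℝ) : ℂ) + ((m - z.re : ℝ) : ℂ) := by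
          have h1 := Complex.add_conj z
          push_cast at h1 ⊢
          linear_combination -h1
        have e2 : ((m:ℂ) - z) * ((m:ℂ) - (starRingEnd ℂ) z) =
            ((m - z.re : ℝ) : ℂ) * ((m - z.re : ℝ) : ℂ) + ((z.im ^ 2 : ℝ) : ℂ) := by
          have h1 := Complex.add_conj z
          have h2 := Complex.mul_conj z
          rw [Complex.normSq_apply] at h2
          push_cast at h1 h2 ⊢
          linear_combination h2 - (m:ℂ) * h1
        have key : (X + C ((m:ℂ) - z)) * (X + C ((m:ℂ) - (starRingEnd ℂ) z)) =
            (X + C (((m - z.re : ℝ) : ℂ))) * (X + C (((m - z.re : ℝ) : ℂ)))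
              + C (((z.im ^ 2 : ℝ) : ℂ)) := by
          calc (X + C ((m:ℂ) - z)) * (X + C ((m:ℂ) - (starRingEnd ℂ) z))
              = X ^ 2 + C (((m:ℂ) - z) + ((m:ℂ) - (starRingEnd ℂ) z)) * X
                  + C (((m:ℂ) - z) * ((m:ℂ) - (starRingEnd ℂ) z)) := by
                simp only [C_add, C_mul]; ring
            _ = X ^ 2 + C (((m - z.re : ℝ) : ℂ) + ((m - z.re : ℝ) : ℂ)) * X
                  + C (((m - z.re : ℝ) : ℂ) * ((m - z.re : ℝ) : ℂ) + ((z.im ^ 2 : ℝ) : ℂ)) := by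
                rw [e1, e2]
            _ = (X + C (((m - z.re : ℝ) : ℂ))) * (X + C (((m - z.re : ℝ) : ℂ)))
                  + C (((z.im ^ 2 : ℝ) : ℂ)) := by
                simp only [C_add, C_mul]; ring
        have hsplit := Finset.mul_prod_erase s (fun v => X + C ((m:ℂ) - v)) hz
        have hsplit2 := Finset.mul_prod_erase (s.erase z) (fun v => X + C ((m:ℂ) - v)) hwz'
        rw [← hsplit, ← hsplit2, ← mul_assoc, key, ← hmap']
        simp only [Polynomial.map_add, Polynomial.map_mul, map_C, map_X,
          Complex.coe_algebraMap]
        ring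
      · have hA := (hR'.mul_X_add_C hN0 huN).mul_X_add_C hN0 huN
        have hB := (hR'.smul (sq_nonneg z.im)).mono
          (by omega : c - 2 ≤ c - 2 + 1 + 1)
        have hAB := hA.add hB
        have hcc : c - 2 + 1 + 1 = c := by omega
        rwa [hcc] at hAB

/-- For `k > 2` and `m ≥ φ(k) + 1`, writing `Φ_k(m+X) = Σ_{d=0}^{φ(k)} p_d X^d`,
the coefficients satisfy `0 < p_{φ(k)-1} ≤ p_{φ(k)-2} ≤ ⋯ ≤ p₁ ≤ p₀` and `p₀ ≥ 2`. -/
theorem cyclotomic_shift_coeffs_monotone (k m : ℕ) (hk : 2 < k)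
    (hm : Nat.totient k + 1 ≤ m) :
    0 < ((cyclotomic k ℤ).comp (X + C (m : ℤ))).coeff (Nat.totient k - 1) ∧
      (∀ d : ℕ, 1 ≤ d → d ≤ Nat.totient k - 1 →
        ((cyclotomic k ℤ).comp (X + C (m : ℤ))).coeff d ≤
          ((cyclotomic k ℤ).comp (X + C (m : ℤ))).coeff (d - 1)) ∧
      2 ≤ ((cyclotomic k ℤ).comp (X + C (m : ℤ))).coeff 0 := by
  have hk0 : 0 < k := by omega
  set n := Nat.totient k with hn
  have hn2 : 2  ≤ n := by
    have he := Nat.totient_even hk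
    have hp : 0 < n := Nat.totient_pos.mpr hk0
    rcases he with ⟨t, ht⟩
    omega
  have hm3 : 3 ≤ m := by omega
  -- the primitive roots
  have hprim : IsPrimitiveRoot (Complex.exp (2 * Real.pi * Complex.I / k)) k :=
    Complex.isPrimitiveRoot_exp k hk0.ne'
  have hcard : (primitiveRoots k ℂ).card = n := hprim.card_primitiveRoots
  have hmem : ∀ z ∈ primitiveRoots k ℂ, IsPrimitiveRoot z k := fun z hz =>
    (mem_primitiveRoots hk0).mp hz
  have hnorm : ∀ z ∈ primitiveRoots k ℂ, ‖z‖ = 1 := fun z hz =>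
    (hmem z hz).norm'_eq_one hk0.ne'
  have hre : ∀ z ∈ primitiveRoots k ℂ, z.re ≤ 1 := by
    intro z hz
    calc z.re ≤ |z.re| := le_abs_self _
      _ ≤ ‖z‖ := Complex.abs_re_le_norm z
      _ = 1 := hnorm z hz
  have him : ∀ z ∈ primitiveRoots k ℂ, z.im ≠ 0 := by
    intro z hz h0
    have hzre : (z.re : ℂ) = z := Complex.conj_eq_iff_re.mp (Complex.conj_eq_iff_im.mpr h0)
    have habs : |z.re| = 1 := by
      rw [← Real.norm_eq_abs, ← Complex.norm_real, hzre]; exact hnorm z hz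
    have hz2 : z ^ 2 = 1 := by
      rcases abs_eq (by norm_num : (0:ℝ) ≤ 1) |>.mp habs with h | h
      · rw [← hzre, h]; norm_num
      · rw [← hzre, h]; norm_num
    have := Nat.le_of_dvd (by norm_num) ((hmem z hz).dvd_of_pow_eq_one 2 hz2)
    omega
  have hconj : ∀ z ∈ primitiveRoots k ℂ, (starRingEnd ℂ) z ∈ primitiveRoots k ℂ := by
    intro z hz
    exact (mem_primitiveRoots hk0).mpr
      (((hmem z hz).map_of_injective (starRingEnd ℂ).injective))
  -- apply the pairing lemma
  obtain ⟨r, hmap, hR⟩ := cyc_pair (m : ℝ) (by exact_mod_cast by omega : (1:ℝ) ≤ m)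
    n (primitiveRoots k ℂ) hcard hconj him hre
  -- identify the complex polynomial
  set q : ℤ[X] := (cyclotomic k ℤ).comp (X + C (m : ℤ)) with hq
  have hqmap : q.map (Int.castRingHom ℂ) = ∏ z ∈ primitiveRoots k ℂ, (X + C (((m:ℝ):ℂ) - z)) := by
    rw [hq, Polynomial.map_comp, map_cyclotomic_int]
    rw [cyclotomic_eq_prod_X_sub_primitiveRoots hprim]
    rw [Polynomial.prod_comp]
    simp only [Polynomial.map_add, map_C, map_X]
    refine Finset.prod_congr rfl fun z hz => ?_
    rw [sub_comp, X_comp, C_comp, add_sub_assoc, ← C_sub]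
    congr 2
  have hcoe : ∀ d, ((q.coeff d : ℤ) : ℝ) = r.coeff d := by
    intro d
    have h1 : (q.map (Int.castRingHom ℂ)).coeff d = (r.map (algebraMap ℝ ℂ)).coeff d := by
      rw [hqmap, hmap]
    rw [coeff_map, coeff_map] at h1
    have h2 : ((q.coeff d : ℤ) : ℂ) = ((r.coeff d : ℝ) : ℂ) := by
      simpa using h1
    exact_mod_cast h2
  -- leading coefficient
  have hmonic : q.Monic := (cyclotomic.monic k ℤ).comp_X_add_C _
  have hdeg : q.natDegree = n := by
    rw [hq, natDegree_comp, natDegree_cyclotomic, natDegree_X_add_C, mul_one]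
  have hlead : q.coeff n = 1 := by
    rw [← hdeg]; exact hmonic.coeff_natDegree
  have hrn : r.coeff n = 1 := by
    rw [← hcoe n, hlead]; norm_num
  have hN : (n : ℝ) ≤ (m : ℝ) - 1 := by
    have : (n:ℝ) + 1 ≤ (m:ℝ) := by exact_mod_cast hm
    linarith
  -- coefficient n-1 bound
  have hrat := hR.2.2 n (by omega) le_rfl
  rw [hrn] at hrat
  have hn1 : ((n:ℝ) - n + 1) = 1 := by ring
  rw [hn1, one_mul, mul_one] at hrat
  have hnm4 : (4:ℝ) ≤ (n : ℝ) * ((m:ℝ) - 1) := by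
    have h1 : (2:ℝ) ≤ (n:ℝ) := by exact_mod_cast hn2
    nlinarith
  have hcn1 : (4:ℝ) ≤ r.coeff (n - 1) := by
    have : r.coeff (n - 1) = r.coeff (n - 1) := rfl
    calc (4:ℝ) ≤ (n : ℝ) * ((m:ℝ) - 1) := hnm4
      _ ≤ r.coeff (n - 1) := hrat
  refine ⟨?_, ?_, ?_⟩
  · have : (0:ℝ) < ((q.coeff (n-1) : ℤ) : ℝ) := by rw [hcoe]; linarith
    exact_mod_cast this
  · intro d hd1 hd2
    have := hR.step hN hd1
    rw [← hcoe d, ← hcoe (d-1)] at this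
    exact_mod_cast this
  · have h0 : (4:ℝ) ≤ r.coeff 0 := le_trans hcn1 (hR.le_coeff_zero hN (n-1))
    have : ((2:ℤ) : ℝ) ≤ ((q.coeff 0 : ℤ) : ℝ) := by rw [hcoe]; norm_num; linarith
    exact_mod_cast this
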